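/- For every nonnegative integer D, there exists a planar graph all of whose cycles have length 3 that is not (0, D)-colorable. -/

import Mathlib

open SimpleGraph

/-- `H` is a minor of `G`: branch sets are nonempty, connected, pairwise disjoint,
and edges of `H` are realized between branch sets. -/
def SimpleGraph.IsMinor {W V : Type*} (H : SimpleGraph W) (G : SimpleGraph V) : Prop :=
  ∃ f : W → Set V, (∀ w, (f w).Nonempty) ∧ (∀ w, (G.induce (f w)).Connected) ∧
    (∀ w w', w ≠ w' → Disjoint (f w) (f w')) ∧
    (∀ w w', H.Adj w w' → ∃ a ∈ f w, ∃ b ∈ f w', G.Adj a b)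

/-- A graph is planar iff it has no `K₅` minor and no `K₃,₃` minor (Wagner's theorem). -/
def SimpleGraph.Planar {V : Type*} (G : SimpleGraph V) : Prop :=
  ¬ (completeGraph (Fin 5)).IsMinor G ∧
    ¬ (completeBipartiteGraph (Fin 3) (Fin 3)).IsMinor G

/-- `G` contains no cycle of length `n` (as a subgraph). -/
def SimpleGraph.HasNoCycleOfLength {V : Type*} (G : SimpleGraph V) (n : ℕ) : Prop :=
  ∀ (v : V) (w : G.Walk v v), w.IsCycle → w.length ≠ n

/-- `f` is a `(d 0, …, d (k-1))`-coloring of `G`: each vertex has at most `d (f v)`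
neighbors in its own color class. -/
def SimpleGraph.IsDefectiveColoring {V : Type*} {k : ℕ} (G : SimpleGraph V)
    (d : Fin k → ℕ) (f : V → Fin k) : Prop :=
  ∀ v, {u | G.Adj v u ∧ f u = f v}.ncard ≤ d (f v)

/-- `G` is `(d 0, …, d (k-1))`-colorable. -/
def SimpleGraph.DefectiveColorable {V : Type*} {k : ℕ} (G : SimpleGraph V)
    (d : Fin k → ℕ) : Prop :=
  ∃ f : V → Fin k, G.IsDefectiveColoring d f

abbrev TVert (D : ℕ) : Type := Bool × Option (Fin (D+1) × Bool)

def TGraph (D : ℕ) : SimpleGraph (TVert D) where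
  Adj u v := match u, v with
    | (s, none), (t, none) => s ≠ t
    | (s, none), (t, some _) => s = t
    | (s, some _), (t, none) => s = t
    | (s, some (i, b)), (t, some (j, c)) => s = t ∧ i = j ∧ b ≠ c
  symm := ⟨by
    rintro ⟨s, _ | ⟨i, b⟩⟩ ⟨t, _ | ⟨j, c⟩⟩ <;> simp_all <;> tauto⟩
  loopless := ⟨by
    rintro ⟨s, _ | ⟨i, b⟩⟩ <;> simp_all⟩

lemma adj_tri {D : ℕ} {s : Bool} {i : Fin (D+1)} {b : Bool} {z : TVert D} :
    (TGraph D).Adj (s, some (i, b)) z ↔ z = (s, none) ∨ z = (s, some (i, !b)) := by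
  obtain ⟨t, _ | ⟨j, c⟩⟩ := z <;>
    simp [TGraph, Prod.ext_iff, eq_comm, Bool.eq_not_iff] <;> tauto

lemma adj_hub_tri {D : ℕ} (s : Bool) (i : Fin (D+1)) (b : Bool) :
    (TGraph D).Adj (s, none) (s, some (i, b)) := by
  simp [TGraph]

lemma adj_hubs {D : ℕ} : (TGraph D).Adj (false, none) (true, none) := by
  simp [TGraph]

lemma adj_mates {D : ℕ} (s : Bool) (i : Fin (D+1)) (b : Bool) :
    (TGraph D).Adj (s, some (i, b)) (s, some (i, !b)) := by
  simp [TGraph]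

lemma fin2_cases (x : Fin 2) : x = 0 ∨ x = 1 := by omega

lemma no_adj_zero {D : ℕ} {f : TVert D → Fin 2}
    (hf : (TGraph D).IsDefectiveColoring ![0, D] f) {u v : TVert D}
    (h : (TGraph D).Adj u v) (hu : f u = 0) (hv : f v = 0) : False := by
  have h2 := hf u
  rw [hu] at h2
  simp only [Matrix.cons_val_zero, Nat.le_zero] at h2
  rw [Set.ncard_eq_zero (Set.toFinite _)] at h2
  have hmem : v ∈ {u_1 | (TGraph D).Adj u u_1 ∧ f u_1 = 0} := ⟨h, hv⟩
  rw [h2] at hmem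
  exact hmem

lemma hub_not_one {D : ℕ} {f : TVert D → Fin 2}
    (hf : (TGraph D).IsDefectiveColoring ![0, D] f) (s : Bool) :
    f (s, none) ≠ 1 := by
  intro h1
  set A : Set (TVert D) := {u | (TGraph D).Adj (s, none) u ∧ f u = 1} with hA
  have hcard : A.ncard ≤ D := by
    have h2 := hf (s, none); rw [h1] at h2; simpa using h2
  set g : Fin (D+1) → TVert D := fun i =>
    if f (s, some (i, false)) = 1 then (s, some (i, false)) else (s, some (i, true)) with hg
  have hmem : ∀ i, g i ∈ A := by
    intro i
    rcases fin2_cases (f (s, some (i, false))) with h0 | h1'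
    · have hne : ¬ (f (s, some (i, false)) = 1) := by rw [h0]; decide
      have h1'' : f (s, some (i, true)) = 1 := by
        rcases fin2_cases (f (s, some (i, true))) with h0' | h1' 
        · exact absurd (no_adj_zero hf (adj_mates s i false) h0 (by simpa using h0')) (by simp)
        · exact h1'
      refine ⟨?_, ?_⟩
      · simp only [hg, hne, if_false]; exact adj_hub_tri s i true
      · simp only [hg, hne, if_false]; exact h1''
    · refine ⟨?_, ?_⟩
      · simp only [hg, h1', if_true]; exact adj_hub_tri s i false
      · simp only [hg, h1', if_true]
  have hinj : Function.Injective g := by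
    intro i j hij
    simp only [hg] at hij
    split_ifs at hij <;> simp_all [Prod.ext_iff]
  have hsub : Set.range g ⊆ A := by rintro _ ⟨i, rfl⟩; exact hmem i
  have : (Set.range g).ncard = D + 1 := by
    rw [← Set.image_univ, Set.ncard_image_of_injective _ hinj, Set.ncard_univ]
    simp
  have := Set.ncard_le_ncard hsub (Set.toFinite _)
  omega

lemma not_colorable (D : ℕ) : ¬ (TGraph D).DefectiveColorable ![0, D] := by
  rintro ⟨f, hf⟩
  have h0 : f (false, none) = 0 := (fin2_cases _).resolve_right (hub_not_one hf false)
  have h1 : f (true, none) = 0 := (fin2_cases _).resolve_right (hub_not_one hf true)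
  exact no_adj_zero hf adj_hubs h0 h1

open SimpleGraph.Walk in
lemma path_to_hub {D : ℕ} {s : Bool} {i : Fin (D+1)} {c : Bool}
    (q : (TGraph D).Walk (s, some (i, c)) (s, none)) (hq : q.IsPath)
    (hu : ((s, some (i, !c)) : TVert D) ∉ q.support) : q.length = 1 := by
  cases q with
  | cons h r =>
    rename_i d
    rcases adj_tri.mp h with rfl | rfl
    · have hr : r = Walk.nil := SimpleGraph.Walk.isPath_iff_eq_nil.mp hq.of_cons
      subst hr
      simp
    · exact absurd (by simp [r.start_mem_support] : _ ∈ (Walk.cons h r).support) hu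

open SimpleGraph.Walk in
lemma cycle_at_tri {D : ℕ} {s : Bool} {i : Fin (D+1)} {b : Bool}
    (w : (TGraph D).Walk (s, some (i, b)) (s, some (i, b))) (hw : w.IsCycle) :
    w.length = 3 := by
  cases w with
  | nil => exact absurd rfl hw.ne_nil
  | cons h p =>
    rename_i a
    have hlen : 3 ≤ (Walk.cons h p).length := hw.three_le_length
    rw [SimpleGraph.Walk.length_cons] at hlen
    rw [SimpleGraph.Walk.cons_isCycle_iff] at hw
    obtain ⟨hp, -⟩ := hw
    have hne : ((s, some (i, b)) : TVert D) ≠ a := h.ne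
    obtain ⟨c, h₂, r, heq⟩ := exists_eq_cons_of_ne hne p.reverse
    have hpr := hp.reverse
    rw [heq, SimpleGraph.Walk.cons_isPath_iff] at hpr
    obtain ⟨hr, hur⟩ := hpr
    have hplen : p.length = r.length + 1 := by
      have := p.length_reverse
      rw [heq] at this
      simpa using this.symm
    have hac : a ≠ c := by
      rintro rfl
      rw [SimpleGraph.Walk.isPath_iff_eq_nil] at hr
      subst hr
      simp at hplen
      omega
    rcases adj_tri.mp h with rfl | rfl <;> rcases adj_tri.mp h₂ with rfl | rfl
    · exact absurd rfl hac
    · -- a = hub, c = mate ; r : Walk (mate) (hub)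
      have : r.length = 1 := path_to_hub r hr (by rwa [Bool.not_not])
      simp [hplen, this]
    · -- a = mate, c = hub ; r : Walk hub mate, use reverse
      have : r.reverse.length = 1 := by
        apply path_to_hub r.reverse hr.reverse
        rw [Bool.not_not, SimpleGraph.Walk.support_reverse, List.mem_reverse]
        exact hur
      rw [SimpleGraph.Walk.length_reverse] at this
      simp [hplen, this]
    · exact absurd rfl hac

open SimpleGraph.Walk in
lemma cycle_three {D : ℕ} (v : TVert D) (w : (TGraph D).Walk v v) (hw : w.IsCycle) :
    w.length = 3 := by
  -- find a non-hub vertex on the cycle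
  have hex : ∃ u ∈ w.support, u.2 ≠ none := by
    by_contra hall
    push_neg at hall
    have hsub : w.support.tail.toFinset ⊆ {((false, none) : TVert D), (true, none)} := by
      intro x hx
      rw [List.mem_toFinset] at hx
      have hx' := hall x (List.mem_of_mem_tail hx)
      obtain ⟨t, xo⟩ := x
      simp only at hx'
      subst hx'
      cases t <;> simp
    have hcard := Finset.card_le_card hsub
    rw [List.toFinset_card_of_nodup hw.support_nodup] at hcard
    have h2 : ({((false, none) : TVert D), (true, none)} : Finset (TVert D)).card ≤ 2 :=
      (Finset.card_insert_le _ _).trans (by simp)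
    have hlen : w.support.tail.length = w.length := by
      have := w.length_support
      have := w.support.length_tail
      omega
    have := hw.three_le_length
    omega
  obtain ⟨u, hu, hu2⟩ := hex
  have hrot : (w.rotate _ hu).length = w.length := by
    have h1 := SimpleGraph.Walk.rotate_darts w _ hu
    have := h1.perm.length_eq
    rw [length_darts, length_darts] at this
    exact this
  rw [← hrot]
  obtain ⟨t, _ | ⟨i, b⟩⟩ := u
  · simp at hu2
  · exact cycle_at_tri (w.rotate _ hu) (hw.rotate hu)

lemma hubfree_sub {D : ℕ} {B : Set (TVert D)} (hne : B.Nonempty)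
    (hconn : ((TGraph D).induce B).Connected) (hfree : ∀ x ∈ B, x.2 ≠ none) :
    ∃ s i, ∀ x ∈ B, ∃ b, x = (s, some (i, b)) := by
  obtain ⟨v, hv⟩ := hne
  obtain ⟨s, _ | ⟨i, b⟩⟩ := v
  · exact absurd rfl (hfree _ hv)
  · refine ⟨s, i, ?_⟩
    intro u hu
    have hreach := hconn.preconnected ⟨(s, some (i, b)), hv⟩ ⟨u, hu⟩
    obtain ⟨p⟩ := hreach
    have key : ∀ (x y : B) (p : ((TGraph D).induce B).Walk x y),
        (∃ b', (x : TVert D) = (s, some (i, b'))) → ∃ b', (y : TVert D) = (s, some (i, b')) := by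
      intro x y p
      induction p with
      | nil => exact id
      | cons h q ih =>
        rename_i x1 z y1
        rintro ⟨b', hb'⟩
        apply ih
        have hadj : (TGraph D).Adj (x1 : TVert D) (z : TVert D) := h
        rw [hb'] at hadj
        rcases adj_tri.mp hadj with hz | hz
        · exact absurd (by rw [hz]) (hfree _ z.2)
        · exact ⟨!b', hz⟩
    exact key _ _ p ⟨b, rfl⟩

lemma pigeon {W : Type*} [Fintype W] {D : ℕ} (f : W → Set (TVert D))
    (hdisj : ∀ w w', w ≠ w' → Disjoint (f w) (f w')) (S : Finset (TVert D))
    (hS : S.card < Fintype.card W) (c : W → TVert D)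
    (hc : ∀ j, c j ∈ f j ∧ c j ∈ S) : False := by
  have hcard : Fintype.card ↥S < Fintype.card W := by rwa [Fintype.card_coe]
  obtain ⟨j, k, hjk, he⟩ :=
    Fintype.exists_ne_map_eq_of_card_lt (fun j => (⟨c j, (hc j).2⟩ : ↥S)) hcard
  have hck : c j ∈ f k := by
    have : c j = c k := congrArg Subtype.val he
    rw [this]; exact (hc k).1
  exact Set.disjoint_left.mp (hdisj j k hjk) (hc j).1 hck

lemma exists_hubfree {W : Type*} [Fintype W] {D : ℕ} (hW : 2 < Fintype.card W)
    (f : W → Set (TVert D)) (hdisj : ∀ w w', w ≠ w' → Disjoint (f w) (f w')) :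
    ∃ w, ∀ x ∈ f w, x.2 ≠ none := by
  by_contra h'
  push_neg at h'
  choose x hx hx2 using h'
  obtain ⟨w, w', hne', he⟩ := Fintype.exists_ne_map_eq_of_card_lt
    (fun w => (x w).1) (by simpa using hW)
  have hxx : x w = x w' := Prod.ext he (by rw [hx2, hx2])
  exact Set.disjoint_left.mp (hdisj _ _ hne') (hx w) (hxx ▸ hx w')

lemma S_card {D : ℕ} (s : Bool) (i : Fin (D+1)) :
    ({((s, none) : TVert D), (s, some (i, false)), (s, some (i, true))} : Finset (TVert D)).card ≤ 3 := by
  refine (Finset.card_insert_le _ _).trans ?_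
  have h2 := Finset.card_insert_le ((s, some (i, false)) : TVert D)
    ({((s, some (i, true)) : TVert D)} : Finset (TVert D))
  simp only [Finset.card_singleton] at h2
  omega

lemma no_K5 (D : ℕ) : ¬ (completeGraph (Fin 5)).IsMinor (TGraph D) := by
  rintro ⟨f, hne, hconn, hdisj, hedge⟩
  obtain ⟨w, hwfree⟩ := exists_hubfree (by simp) f hdisj
  obtain ⟨s, i, hBsub⟩ := hubfree_sub (hne w) (hconn w) hwfree
  set S : Finset (TVert D) := {(s, none), (s, some (i, false)), (s, some (i, true))} with hSdef
  have hnbr : ∀ p ∈ f w, ∀ q, (TGraph D).Adj p q → q ∈ S := by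
    intro p hp q hq
    obtain ⟨b, rfl⟩ := hBsub p hp
    rcases adj_tri.mp hq with rfl | rfl
    · simp [hSdef]
    · cases b <;> simp [hSdef]
  have hc : ∀ w' : Fin 5, ∃ cv, cv ∈ f w' ∧ cv ∈ S := by
    intro w'
    by_cases hww : w' = w
    · subst hww
      obtain ⟨v, hv⟩ := hne w'
      obtain ⟨b, rfl⟩ := hBsub v hv
      exact ⟨_, hv, by cases b <;> simp [hSdef]⟩
    · obtain ⟨a, ha, bb, hbb, hab⟩ := hedge w w' (fun h => hww h.symm)
      exact ⟨bb, hbb, hnbr a ha bb hab⟩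
  choose c hc1 hc2 using hc
  exact pigeon f hdisj S (by have := S_card s i; rw [← hSdef] at this; simp; omega) c
    (fun j => ⟨hc1 j, hc2 j⟩)

lemma no_K33 (D : ℕ) :
    ¬ (completeBipartiteGraph (Fin 3) (Fin 3)).IsMinor (TGraph D) := by
  rintro ⟨f, hne, hconn, hdisj, hedge⟩
  obtain ⟨l, hlfree⟩ := exists_hubfree (by simp) (fun l : Fin 3 => f (Sum.inl l))
    (fun a b hab => hdisj _ _ (by simpa using hab))
  obtain ⟨s, i, hBsub⟩ := hubfree_sub (hne (Sum.inl l)) (hconn _) hlfree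
  set S : Finset (TVert D) := {(s, none), (s, some (i, false)), (s, some (i, true))} with hSdef
  have hnbr : ∀ p ∈ f (Sum.inl l), ∀ q, (TGraph D).Adj p q → q ∈ S := by
    intro p hp q hq
    obtain ⟨b, rfl⟩ := hBsub p hp
    rcases adj_tri.mp hq with rfl | rfl
    · simp [hSdef]
    · cases b <;> simp [hSdef]
  set ι : Option (Fin 3) → (Fin 3 ⊕ Fin 3) := fun o => o.elim (Sum.inl l) Sum.inr with hι
  have hιinj : Function.Injective ι := by
    rintro (_ | r) (_ | r') h
    · rfl
    · exact absurd h (by simp [hι])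
    · exact absurd h (by simp [hι])
    · simpa [hι] using h
  have hc : ∀ o : Option (Fin 3), ∃ cv, cv ∈ f (ι o) ∧ cv ∈ S := by
    rintro (_ | r)
    · obtain ⟨v, hv⟩ := hne (Sum.inl l)
      obtain ⟨b, rfl⟩ := hBsub v hv
      exact ⟨_, hv, by cases b <;> simp [hSdef]⟩
    · obtain ⟨a, ha, bb, hbb, hab⟩ := hedge (Sum.inl l) (Sum.inr r) (by simp)
      exact ⟨bb, hbb, hnbr a ha bb hab⟩
  choose c hc1 hc2 using hc
  exact pigeon (fun o => f (ι o)) (fun o o' hoo => hdisj _ _ (fun h => hoo (hιinj h))) S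
    (by have := S_card s i; rw [← hSdef] at this; simp; omega) c (fun j => ⟨hc1 j, hc2 j⟩)

theorem stmt3 (D : ℕ) :
    ∃ (V : Type) (_ : Fintype V) (G : SimpleGraph V), G.Planar ∧
      (∀ (v : V) (w : G.Walk v v), w.IsCycle → w.length = 3) ∧
      ¬ G.DefectiveColorable ![0, D] :=
  ⟨TVert D, inferInstance, TGraph D, ⟨no_K5 D, no_K33 D⟩, cycle_three, not_colorable D⟩
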